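/- Let Ψ be a nonnegative real random variable with finite second moment and let k ∈ ℕ. Then |E[e^{-Ψ} Ψ^k / k!] − e^{-E[Ψ]} (E[Ψ])^k / k!| ≤ 2 · Var[Ψ]. -/

import Mathlib

open MeasureTheory ProbabilityTheory

noncomputable def poiF (k : ℕ) (x : ℝ) : ℝ := Real.exp (-x) * x ^ k / (Nat.factorial k : ℝ)

noncomputable def poiD1 (k : ℕ) (x : ℝ) : ℝ :=
  (if k = 0 then 0 else poiF (k - 1) x) - poiF k x

noncomputable def poiD2 (k : ℕ) (x : ℝ) : ℝ :=
  (if k ≤ 1 then 0 else poiF (k - 2) x) - 2 * (if k = 0 then 0 else poiF (k - 1) x) + poiF k x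

lemma poiF_nonneg (k : ℕ) {x : ℝ} (hx : 0 ≤ x) : 0 ≤ poiF k x := by
  unfold poiF; positivity

lemma poiF_le_one (k : ℕ) {x : ℝ} (hx : 0 ≤ x) : poiF k x ≤ 1 := by
  have h := Real.pow_div_factorial_le_exp x hx k
  have h2 : Real.exp (-x) * (x ^ k / (Nat.factorial k : ℝ)) ≤ Real.exp (-x) * Real.exp x :=
    mul_le_mul_of_nonneg_left h (Real.exp_pos _).le
  rw [← Real.exp_add, neg_add_cancel, Real.exp_zero] at h2
  unfold poiF
  rw [mul_div_assoc]
  exact h2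

lemma hasDerivAt_poiF (k : ℕ) (x : ℝ) : HasDerivAt (poiF k) (poiD1 k x) x := by
  have hexp : HasDerivAt (fun t : ℝ => Real.exp (-t)) (-Real.exp (-x)) x := by
    exact ((Real.hasDerivAt_exp (-x)).comp x (hasDerivAt_neg x)).congr_deriv (by simp)
  have hpow : HasDerivAt (fun t : ℝ => t ^ k) ((k : ℝ) * x ^ (k - 1)) x := hasDerivAt_pow k x
  have h := (hexp.mul hpow).div_const (Nat.factorial k : ℝ)
  refine h.congr_deriv ?_
  unfold poiD1 poiF
  cases k with
  | zero => simp
  | succ j =>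
    simp only [Nat.succ_sub_one, if_neg (Nat.succ_ne_zero j)]
    rw [Nat.factorial_succ]
    push_cast
    have hj : (Nat.factorial j : ℝ) ≠ 0 := Nat.cast_ne_zero.2 (Nat.factorial_ne_zero j)
    field_simp
    ring

lemma hasDerivAt_poiD1 (k : ℕ) (x : ℝ) : HasDerivAt (poiD1 k) (poiD2 k x) x := by
  unfold poiD1
  match k with
  | 0 =>
    simp only [if_pos rfl]
    have h := ((hasDerivAt_poiF 0 x).const_sub 0)
    refine h.congr_deriv ?_
    unfold poiD2 poiD1
    simp
  | 1 =>
    simp only [if_neg one_ne_zero]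
    have h := (hasDerivAt_poiF 0 x).sub (hasDerivAt_poiF 1 x)
    refine h.congr_deriv ?_
    unfold poiD2 poiD1
    norm_num
    ring
  | (j+2) =>
    simp only [if_neg (by omega : ¬ j + 2 = 0)]
    have h := (hasDerivAt_poiF (j+1) x).sub (hasDerivAt_poiF (j+2) x)
    refine h.congr_deriv ?_
    unfold poiD2 poiD1
    simp only [if_neg (by omega : ¬ j + 2 ≤ 1), if_neg (by omega : ¬ j + 2 = 0),
      if_neg (by omega : ¬ j + 1 = 0)]
    norm_num
    ring

lemma abs_poiD2_le (k : ℕ) {x : ℝ} (hx : 0 ≤ x) : |poiD2 k x| ≤ 2 := by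
  unfold poiD2
  have h1 : ∀ j, 0 ≤ poiF j x := fun j => poiF_nonneg j hx
  have h2 : ∀ j, poiF j x ≤ 1 := fun j => poiF_le_one j hx
  rw [abs_le]
  constructor <;> [skip; skip] <;>
  · split_ifs <;>
    · nlinarith [h1 (k-2), h2 (k-2), h1 (k-1), h2 (k-1), h1 k, h2 k]

lemma poiD1_lipschitz (k : ℕ) {x m : ℝ} (hx : 0 ≤ x) (hm : 0 ≤ m) :
    |poiD1 k x - poiD1 k m| ≤ 2 * |x - m| := by
  have := Convex.norm_image_sub_le_of_norm_hasDerivWithin_le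
    (f := poiD1 k) (f' := poiD2 k) (C := 2) (s := Set.Ici (0:ℝ))
    (fun t ht => (hasDerivAt_poiD1 k t).hasDerivWithinAt)
    (fun t ht => by simpa [Real.norm_eq_abs] using abs_poiD2_le k ht)
    (convex_Ici 0) hm hx
  simpa [Real.norm_eq_abs] using this

lemma poi_taylor (k : ℕ) {x m : ℝ} (hx : 0 ≤ x) (hm : 0 ≤ m) :
    |poiF k x - poiF k m - poiD1 k m * (x - m)| ≤ 2 * (x - m) ^ 2 := by
  set g : ℝ → ℝ := fun t => poiF k t - poiD1 k m * t with hg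
  have hderiv : ∀ t, HasDerivAt g (poiD1 k t - poiD1 k m) t := fun t =>
    by exact ((hasDerivAt_poiF k t).sub ((hasDerivAt_id t).const_mul (poiD1 k m))).congr_deriv (by simp)
  have hsub : Set.uIcc m x ⊆ Set.Ici (0:ℝ) := by
    intro t ht
    rw [Set.mem_uIcc] at ht
    rcases ht with ⟨h1, _⟩ | ⟨h1, _⟩ <;> simp only [Set.mem_Ici] <;> linarith
  have key := Convex.norm_image_sub_le_of_norm_hasDerivWithin_le
    (f := g) (f' := fun t => poiD1 k t - poiD1 k m) (C := 2 * |x - m|) (s := Set.uIcc m x)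
    (fun t ht => (hderiv t).hasDerivWithinAt)
    (fun t ht => by
      have h1 := poiD1_lipschitz k (hsub ht) hm
      have h2 : |t - m| ≤ |x - m| := Set.abs_sub_left_of_mem_uIcc ht
      rw [Real.norm_eq_abs]
      calc |poiD1 k t - poiD1 k m| ≤ 2 * |t - m| := h1
        _ ≤ 2 * |x - m| := by linarith)
    (convex_uIcc m x) Set.left_mem_uIcc Set.right_mem_uIcc
  have : g x - g m = poiF k x - poiF k m - poiD1 k m * (x - m) := by simp [hg]; ring
  rw [this, Real.norm_eq_abs, Real.norm_eq_abs] at key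
  calc |poiF k x - poiF k m - poiD1 k m * (x - m)| ≤ 2 * |x - m| * |x - m| := key
    _ = 2 * (x - m) ^ 2 := by rw [mul_assoc, abs_mul_abs_self]; ring

/-- For a nonnegative random variable `Ψ` with finite second moment and `k ∈ ℕ`,
`|E[e^{-Ψ} Ψ^k / k!] − e^{-E[Ψ]} (E[Ψ])^k / k!| ≤ 2·Var[Ψ]`. -/
theorem abs_expectation_poissonWeight_sub_le {Ω : Type*} [MeasurableSpace Ω]
    (μ : Measure Ω) [IsProbabilityMeasure μ] (Ψ : Ω → ℝ) (hΨ : Measurable Ψ)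
    (hnn : ∀ ω, 0 ≤ Ψ ω) (h2 : MemLp Ψ 2 μ) (k : ℕ) :
    |(∫ ω, Real.exp (-Ψ ω) * Ψ ω ^ k / (Nat.factorial k : ℝ) ∂μ)
        - Real.exp (-(∫ ω, Ψ ω ∂μ)) * (∫ ω, Ψ ω ∂μ) ^ k / (Nat.factorial k : ℝ)|
      ≤ 2 * variance Ψ μ := by
  set m := ∫ ω, Ψ ω ∂μ with hmdef
  have hm : 0 ≤ m := integral_nonneg hnn
  have hint1 : Integrable Ψ μ := h2.integrable one_le_two
  have hcont : Continuous (poiF k) := by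
    unfold poiF; fun_prop
  have hintF : Integrable (fun ω => poiF k (Ψ ω)) μ := by
    refine Integrable.mono' (integrable_const 1)
      ((hcont.measurable.comp hΨ).aestronglyMeasurable) ?_
    filter_upwards with ω
    rw [Real.norm_eq_abs, abs_of_nonneg (poiF_nonneg k (hnn ω))]
    exact poiF_le_one k (hnn ω)
  have hsq : Integrable (fun ω => (Ψ ω - m) ^ 2) μ := by
    have := (h2.sub (memLp_const m)).integrable_sq
    simpa [sub_sq] using this
  have hlin : Integrable (fun ω => poiD1 k m * (Ψ ω - m)) μ :=
    ((hint1.sub (integrable_const m)).const_mul _)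
  have hvar : variance Ψ μ = ∫ ω, (Ψ ω - m) ^ 2 ∂μ := by
    rw [variance_eq_integral hΨ.aemeasurable]
  have i1 : Integrable (fun ω => poiF k (Ψ ω) - poiF k m) μ := by
    exact hintF.sub (integrable_const _)
  have i2 : Integrable (fun ω => Ψ ω - m) μ := by
    exact hint1.sub (integrable_const _)
  have hker : (∫ ω, (poiF k (Ψ ω) - poiF k m - poiD1 k m * (Ψ ω - m)) ∂μ)
      = (∫ ω, poiF k (Ψ ω) ∂μ) - poiF k m := by
    rw [integral_sub i1 hlin, integral_sub hintF (integrable_const _),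
        integral_const_mul, integral_sub hint1 (integrable_const _),
        integral_const, integral_const]
    simp [← hmdef]
  have habs : |∫ ω, (poiF k (Ψ ω) - poiF k m - poiD1 k m * (Ψ ω - m)) ∂μ|
      ≤ ∫ ω, 2 * (Ψ ω - m) ^ 2 ∂μ := by
    calc |∫ ω, (poiF k (Ψ ω) - poiF k m - poiD1 k m * (Ψ ω - m)) ∂μ|
        ≤ ∫ ω, |poiF k (Ψ ω) - poiF k m - poiD1 k m * (Ψ ω - m)| ∂μ := by
          simpa [Real.norm_eq_abs] using
            norm_integral_le_integral_norm (fun ω => poiF k (Ψ ω) - poiF k m - poiD1 k m * (Ψ ω - m)) (μ := μ)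
      _ ≤ ∫ ω, 2 * (Ψ ω - m) ^ 2 ∂μ := by
          refine integral_mono (i1.sub hlin).abs (hsq.const_mul 2)
            fun ω => poi_taylor k (hnn ω) hm
  have hgoal : |(∫ ω, poiF k (Ψ ω) ∂μ) - poiF k m| ≤ 2 * variance Ψ μ := by
    rw [← hker, hvar, ← integral_const_mul]
    exact habs
  simpa [poiF] using hgoal
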